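/- Coincident-concatenation corollary of LDCP: Let δ be a finite database of C-sequences and k ≥ 1. For any two coincidences (finite label sets) a and a', the coincident concatenation a ⊕ a' = a ∪ a' satisfies LWU_k(⟨a ∪ a'⟩) ≤ LWU_k(⟨a⟩), where ⟨c⟩ denotes the 1-L-sequence whose only coincidence is c. Hence if ⟨a⟩ is unpromising (LWU_k(⟨a⟩) < ξ), then ⟨a ∪ a'⟩ is also unpromising. -/
import Mathlib


open scoped Classical

variable {α : Type*}

/-- C-eventset containment: `(c, λ) ⊑ (c', λ')` iff `c ⊆ c'` and `λ = λ'`. -/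
def EsetSub (σ τ : Finset α × ℕ) : Prop := σ.1 ⊆ τ.1 ∧ σ.2 = τ.2

/-- C-sequence containment: `C ⊑ C'` iff there are strictly increasing indices
`j_1 < … < j_n` into `C'` with `σ_k ⊑ σ'_{j_k}` for all `k`. -/
def CSub (C C' : List (Finset α × ℕ)) : Prop :=
  ∃ D : List (Finset α × ℕ), D.Sublist C' ∧ List.Forall₂ EsetSub C D

/-- `C ∼ L` : the C-sequence `C` matches the L-sequence `L`. -/
def Matches (C : List (Finset α × ℕ)) (L : List (Finset α)) : Prop :=
  C.map Prod.fst = L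

/-- `L` is a sub-L-sequence of `L'`. -/
def LSub (L L' : List (Finset α)) : Prop :=
  ∃ M : List (Finset α), M.Sublist L' ∧ List.Forall₂ (fun a b => a ⊆ b) L M

/-- Utility of a C-eventset: `u_e (c, λ) = λ · Σ_{l ∈ c} p l`. -/
noncomputable def ue (p : α → ℝ) (σ : Finset α × ℕ) : ℝ := (σ.2 : ℝ) * ∑ l ∈ σ.1, p l

/-- Utility of a C-sequence: sum of the utilities of its C-eventsets. -/
noncomputable def us (p : α → ℝ) (C : List (Finset α × ℕ)) : ℝ := (C.map (ue p)).sum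

/-- `u_maxk (C, k)`: the maximum utility of at most `k` C-eventsets in `C`. -/
noncomputable def umaxk (p : α → ℝ) (C : List (Finset α × ℕ)) (k : ℕ) : ℝ :=
  sSup { x : ℝ | ∃ C'', CSub C'' C ∧ C''.length ≤ k ∧ x = us p C'' }

/-- `LWU_k(L)`: the L-sequence-weighted utilization of `L` w.r.t. maximum length `k`. -/
noncomputable def LWU (p : α → ℝ) (δ : Finset (List (Finset α × ℕ))) (k : ℕ)
    (L : List (Finset α)) : ℝ :=
  ∑ C ∈ δ, if ∃ C', CSub C' C ∧ Matches C' L then umaxk p C k else 0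

/-- `u_max(L)`: the maximum utility of the L-sequence `L` in the database `δ`. -/
noncomputable def umax (p : α → ℝ) (δ : Finset (List (Finset α × ℕ)))
    (L : List (Finset α)) : ℝ :=
  ∑ C ∈ δ, sSup ({ x : ℝ | ∃ C', CSub C' C ∧ Matches C' L ∧ x = us p C' } ∪ {0})

lemma us_nonneg (p : α → ℝ) (hp : ∀ l, 0 ≤ p l) (C : List (Finset α × ℕ)) :
    0 ≤ us p C := by
  unfold us
  apply List.sum_nonneg
  intro x hx
  simp only [List.mem_map] at hx
  obtain ⟨σ, -, rfl⟩ := hx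
  unfold ue
  exact mul_nonneg (by positivity) (Finset.sum_nonneg fun l _ => hp l)

lemma umaxk_nonneg (p : α → ℝ) (hp : ∀ l, 0 ≤ p l) (C : List (Finset α × ℕ)) (k : ℕ) :
    0 ≤ umaxk p C k := by
  apply Real.sSup_nonneg
  rintro x ⟨C'', -, -, rfl⟩
  exact us_nonneg p hp C''

lemma cond_mono (C : List (Finset α × ℕ)) (a a' : Finset α)
    (h : ∃ C', CSub C' C ∧ Matches C' [a ∪ a']) :
    ∃ C', CSub C' C ∧ Matches C' [a] := by
  obtain ⟨C', ⟨D, hD, hF⟩, hM⟩ := h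
  unfold Matches at hM
  match C', hM with
  | [(b, n)], hM =>
    simp at hM
    subst hM
    match D, hF with
    | [(c, m)], hF =>
      obtain ⟨⟨hsub, heq⟩, -⟩ := List.forall₂_cons.mp hF
      refine ⟨[(a, n)], ⟨[(c, m)], hD, ?_⟩, rfl⟩
      exact List.forall₂_cons.mpr ⟨⟨(Finset.subset_union_left).trans hsub, heq⟩, List.Forall₂.nil⟩

/-- Coincident-concatenation corollary of LDCP: for `k ≥ 1`,
`LWU_k(⟨a ∪ a'⟩) ≤ LWU_k(⟨a⟩)`; hence if `⟨a⟩` is unpromising so is `⟨a ∪ a'⟩`. -/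
theorem ldcp_coincident_concat (p : α → ℝ) (hp : ∀ l, 0 ≤ p l)
    (δ : Finset (List (Finset α × ℕ))) (k : ℕ) (hk : 1 ≤ k)
    (a a' : Finset α) (ξ : ℝ) :
    LWU p δ k [a ∪ a'] ≤ LWU p δ k [a] ∧
    (LWU p δ k [a] < ξ → LWU p δ k [a ∪ a'] < ξ) := by
  have hle : LWU p δ k [a ∪ a'] ≤ LWU p δ k [a] := by
    unfold LWU
    apply Finset.sum_le_sum
    intro C _
    by_cases h : ∃ C', CSub C' C ∧ Matches C' [a ∪ a']
    · rw [if_pos h, if_pos (cond_mono C a a' h)]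
    · rw [if_neg h]
      split
      · exact umaxk_nonneg p hp C k
      · exact le_refl 0
  exact ⟨hle, fun h => lt_of_le_of_lt hle h⟩
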